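/- Let p and p* be real numbers. For every n ≥ 0 and every s ∈ ℂ, q_n(s) = ∑_{k=0}^{n} C(n,k) (p*)_{n−k} · 𝔐_k(−s; −p, −1), where C(n,k) is the usual binomial coefficient, (x)_m = x(x−1)⋯(x−m+1) is the falling factorial with (x)_0 = 1, and 𝔐_k(x; b, c) denotes the Meixner polynomial. -/

import Mathlib

/-- `qpoly p ps n s` is `n!` times the `n`-th Taylor coefficient at `z = 0` of
`z ↦ (1 - z)^(p+s) * (1 + z)^(ps - s)` (principal branch powers). -/
noncomputable def qpoly (p ps : ℝ) (n : ℕ) (s : ℂ) : ℂ :=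
  iteratedDeriv n (fun z : ℂ => (1 - z) ^ ((p : ℂ) + s) * (1 + z) ^ ((ps : ℂ) - s)) 0

/-- The Meixner polynomial `𝔐_k(x; b, c)`: `k!` times the `k`-th Taylor coefficient at
`z = 0` of `z ↦ (1 - z/c)^x (1 - z)^(-x-b)` (principal branch powers). -/
noncomputable def meixner (k : ℕ) (x : ℂ) (b : ℝ) (c : ℝ) : ℂ :=
  iteratedDeriv k (fun z : ℂ => (1 - z / (c : ℂ)) ^ x * (1 - z) ^ (-x - (b : ℂ))) 0

/-- The falling factorial `(x)_m = x(x-1)⋯(x-m+1)`, with `(x)_0 = 1`. -/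
noncomputable def fallingFac (x : ℝ) (m : ℕ) : ℝ :=
  ∏ j ∈ Finset.range m, (x - j)

open Complex Finset Filter

lemma mem_slit_one_sub {z : ℂ} (hz : z ∈ Metric.ball (0:ℂ) 1) : (1 - z) ∈ Complex.slitPlane := by
  left
  simp only [Complex.sub_re, Complex.one_re]
  have h1 : |z.re| ≤ ‖z‖ := Complex.abs_re_le_norm z
  have hz' : ‖z‖ < 1 := by simpa [Complex.dist_eq] using hz
  have := abs_le.mp h1
  linarith [this.2]

lemma mem_slit_one_add {z : ℂ} (hz : z ∈ Metric.ball (0:ℂ) 1) : (1 + z) ∈ Complex.slitPlane := by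
  left
  simp only [Complex.add_re, Complex.one_re]
  have h1 : |z.re| ≤ ‖z‖ := Complex.abs_re_le_norm z
  have hz' : ‖z‖ < 1 := by simpa [Complex.dist_eq] using hz
  have := abs_le.mp h1
  linarith [this.1]

lemma an_sub (c : ℂ) : AnalyticOnNhd ℂ (fun z : ℂ => (1 - z) ^ c) (Metric.ball 0 1) := by
  apply AnalyticOnNhd.cpow
  · exact (analyticOnNhd_const (v := (1:ℂ))).sub (analyticOnNhd_id)
  · exact analyticOnNhd_const
  · exact fun z hz => mem_slit_one_sub hz

lemma an_add (c : ℂ) : AnalyticOnNhd ℂ (fun z : ℂ => (1 + z) ^ c) (Metric.ball 0 1) := by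
  apply AnalyticOnNhd.cpow
  · exact (analyticOnNhd_const (v := (1:ℂ))).add (analyticOnNhd_id)
  · exact analyticOnNhd_const
  · exact fun z hz => mem_slit_one_add hz

lemma analyticOnNhd_iteratedDeriv {f : ℂ → ℂ} {s : Set ℂ} (hf : AnalyticOnNhd ℂ f s) (n : ℕ) :
    AnalyticOnNhd ℂ (iteratedDeriv n f) s := by
  induction n with
  | zero => simpa [iteratedDeriv_zero]
  | succ n ih => rw [iteratedDeriv_succ]; exact ih.deriv

lemma leibniz {f g : ℂ → ℂ} {s : Set ℂ} (hs : IsOpen s) (hf : AnalyticOnNhd ℂ f s)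
    (hg : AnalyticOnNhd ℂ g s) (n : ℕ) {x : ℂ} (hx : x ∈ s) :
    iteratedDeriv n (fun z => f z * g z) x =
      ∑ k ∈ range (n + 1),
        (n.choose k : ℂ) * iteratedDeriv k f x * iteratedDeriv (n - k) g x := by
  induction n generalizing x with
  | zero => simp
  | succ n ih =>
    have h1 : iteratedDeriv n (fun z => f z * g z) =ᶠ[nhds x]
        fun y => ∑ k ∈ range (n + 1),
          (n.choose k : ℂ) * iteratedDeriv k f y * iteratedDeriv (n - k) g y :=
      Filter.eventually_of_mem (hs.mem_nhds hx) (fun y hy => ih hy)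
    have hdf : ∀ m, DifferentiableAt ℂ (iteratedDeriv m f) x :=
      fun m => ((analyticOnNhd_iteratedDeriv hf m) x hx).differentiableAt
    have hdg : ∀ m, DifferentiableAt ℂ (iteratedDeriv m g) x :=
      fun m => ((analyticOnNhd_iteratedDeriv hg m) x hx).differentiableAt
    rw [iteratedDeriv_succ, h1.deriv_eq, deriv_fun_sum (fun k _ => by
      simp only [mul_assoc]
      exact ((hdf k).mul (hdg (n - k))).const_mul _)]
    have hterm : ∀ k, deriv (fun y => (n.choose k : ℂ) * iteratedDeriv k f y *
        iteratedDeriv (n - k) g y) x =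
        (n.choose k : ℂ) * (iteratedDeriv (k + 1) f x * iteratedDeriv (n - k) g x +
          iteratedDeriv k f x * iteratedDeriv (n - k + 1) g x) := by
      intro k
      have : (fun y => (n.choose k : ℂ) * iteratedDeriv k f y * iteratedDeriv (n - k) g y)
          = fun y => (n.choose k : ℂ) * (iteratedDeriv k f y * iteratedDeriv (n - k) g y) := by
        funext y; ring
      rw [this, deriv_const_mul (d := fun y => iteratedDeriv k f y * iteratedDeriv (n - k) g y) _ ((hdf k).mul (hdg (n - k))), deriv_fun_mul (hdf k) (hdg (n - k)),
        ← iteratedDeriv_succ, ← iteratedDeriv_succ]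
    simp only [hterm, mul_add]
    rw [Finset.sum_add_distrib, show n + 1 + 1 = n + 2 from rfl]
    simp only [mul_assoc]
    rw [Finset.sum_choose_succ_mul (fun i j => iteratedDeriv i f x * iteratedDeriv j g x) n,
      add_comm]
    congr 1
    refine Finset.sum_congr rfl fun k hk => ?_
    have : k ≤ n := Nat.lt_succ_iff.mp (Finset.mem_range.mp hk)
    rw [show n - k + 1 = n + 1 - k by omega]

lemma iteratedDeriv_one_add_cpow (c : ℂ) (m : ℕ) {x : ℂ} (hx : x ∈ Metric.ball (0:ℂ) 1) :
    iteratedDeriv m (fun z : ℂ => (1 + z) ^ c) x =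
      (∏ j ∈ range m, (c - j)) * (1 + x) ^ (c - m) := by
  induction m generalizing x with
  | zero => simp
  | succ m ih =>
    have h1 : iteratedDeriv m (fun z : ℂ => (1 + z) ^ c) =ᶠ[nhds x]
        fun y => (∏ j ∈ range m, (c - j)) * (1 + y) ^ (c - m) :=
      Filter.eventually_of_mem (Metric.isOpen_ball.mem_nhds hx) fun y hy => ih hy
    have hd : HasDerivAt (fun y : ℂ => (1 + y) ^ (c - m))
        ((c - m) * (1 + x) ^ (c - m - 1) * 1) x :=
      HasDerivAt.cpow_const ((hasDerivAt_id x).const_add 1) (mem_slit_one_add hx)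
    rw [iteratedDeriv_succ, h1.deriv_eq, deriv_const_mul _ hd.differentiableAt, hd.deriv,
      Finset.prod_range_succ, show c - m - 1 = c - (m + 1 : ℕ) by push_cast; ring]
    push_cast
    ring

theorem qpoly_eq_meixner_sum (p ps : ℝ) (n : ℕ) (s : ℂ) :
    qpoly p ps n s =
      ∑ k ∈ Finset.range (n + 1),
        (n.choose k : ℂ) * (fallingFac ps (n - k) : ℂ) * meixner k (-s) (-p) (-1) := by
  set h : ℂ → ℂ := fun z => (1 - z / ((-1 : ℝ) : ℂ)) ^ (-s) * (1 - z) ^ (-(-s) - ((-p : ℝ) : ℂ))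
    with hh
  set g : ℂ → ℂ := fun z => (1 + z) ^ ((ps : ℂ)) with hg
  have hmeix : ∀ k, meixner k (-s) (-p) (-1) = iteratedDeriv k h 0 := fun k => rfl
  have hh' : h = fun z : ℂ => (1 + z) ^ (-s) * (1 - z) ^ (s + (p : ℂ)) := by
    funext z
    have : (1 - z / ((-1 : ℝ) : ℂ)) = 1 + z := by push_cast; ring
    show (1 - z / ((-1 : ℝ) : ℂ)) ^ (-s) * (1 - z) ^ (-(-s) - ((-p : ℝ) : ℂ)) = _
    rw [this, show -(-s) - ((-p : ℝ) : ℂ) = s + (p : ℂ) by push_cast; ring]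
  have hball : (0 : ℂ) ∈ Metric.ball (0 : ℂ) 1 := by simp
  have hFeq : (fun z : ℂ => (1 - z) ^ ((p : ℂ) + s) * (1 + z) ^ ((ps : ℂ) - s)) =ᶠ[nhds 0]
      fun z => h z * g z := by
    refine Filter.eventually_of_mem (Metric.isOpen_ball.mem_nhds hball) fun z hz => ?_
    have hne : (1 + z) ≠ 0 := Complex.slitPlane_ne_zero (mem_slit_one_add hz)
    rw [hh', hg]
    simp only
    rw [show (ps : ℂ) - s = -s + (ps : ℂ) by ring, Complex.cpow_add _ _ hne,
      show (p : ℂ) + s = s + (p : ℂ) by ring]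
    ring
  have han_h : AnalyticOnNhd ℂ h (Metric.ball 0 1) := by
    rw [hh']; exact (an_add (-s)).mul (an_sub (s + (p : ℂ)))
  have han_g : AnalyticOnNhd ℂ g (Metric.ball 0 1) := an_add _
  have hgval : ∀ m : ℕ, iteratedDeriv m g 0 = ((fallingFac ps m : ℝ) : ℂ) := by
    intro m
    rw [hg, iteratedDeriv_one_add_cpow _ m hball]
    simp only [add_zero, Complex.one_cpow, mul_one]
    rw [fallingFac]
    push_cast
    rfl
  rw [qpoly, hFeq.iteratedDeriv_eq, leibniz Metric.isOpen_ball han_h han_g n hball]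
  refine Finset.sum_congr rfl fun k hk => ?_
  rw [hmeix, hgval]
  ring
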